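/- For integers 0 ≤ a ≤ b ≤ 2^n − 1, the convex hull of K(a,b) = {x ∈ {0,1}^n : a ≤ Σ_{i=1}^n 2^{i−1} x_i ≤ b} is a polytope with O(n) facets; specifically, conv(K(a,b)) = {x ∈ [0,1]^n : Σ_{j∉N^a, j>i} x_j ≥ 1 − x_i for all i ∈ N^a, and Σ_{j∈N^b, j>i} (1−x_j) ≥ x_i for all i ∉ N^b}, where N^k = {i : (binary expansion of k) has bit 1 at position i}. -/

import Mathlib

open Finset

def Kset (n a b : ℕ) : Set (Fin n → ℝ) :=
  {x | (∀ i, x i = 0 ∨ x i = 1) ∧ (a : ℝ) ≤ ∑ i : Fin n, 2 ^ (i : ℕ) * x i ∧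
      ∑ i : Fin n, 2 ^ (i : ℕ) * x i ≤ (b : ℝ)}

def Pset (n a b : ℕ) : Set (Fin n → ℝ) :=
  {x | (∀ i, 0 ≤ x i ∧ x i ≤ 1) ∧
      (∀ i : Fin n, Nat.testBit a i →
        1 - x i ≤ ∑ j ∈ Finset.univ.filter
          (fun j : Fin n => ¬ Nat.testBit a j ∧ (i : ℕ) < (j : ℕ)), x j) ∧
      (∀ i : Fin n, ¬ Nat.testBit b i →
        x i ≤ ∑ j ∈ Finset.univ.filter
          (fun j : Fin n => Nat.testBit b j ∧ (i : ℕ) < (j : ℕ)), (1 - x j))}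

lemma testBit_sum : ∀ (n : ℕ) (c : Fin n → Bool) (j : Fin n),
    Nat.testBit (∑ i : Fin n, 2 ^ (i : ℕ) * (c i).toNat) (j : ℕ) = c j := by
  intro n
  induction n with
  | zero => exact fun c j => j.elim0
  | succ n ih =>
    intro c j
    have hs : (∑ i : Fin (n+1), 2 ^ (i : ℕ) * (c i).toNat)
        = (c 0).toNat + 2 * ∑ i : Fin n, 2 ^ (i : ℕ) * (c i.succ).toNat := by
      rw [Fin.sum_univ_succ, Finset.mul_sum]
      simp only [Fin.val_zero, pow_zero, one_mul]
      congr 1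
      exact Finset.sum_congr rfl fun i _ => by rw [Fin.val_succ, pow_succ]; ring
    rcases Fin.eq_zero_or_eq_succ j with rfl | ⟨j', rfl⟩
    · rw [hs]
      rcases Bool.eq_false_or_eq_true (c 0) with h | h <;>
        simp [h, Nat.testBit_zero, Nat.add_mul_mod_self_left, Nat.mul_mod_right] <;> omega
    · have : ((j'.succ : Fin (n+1)) : ℕ) = (j' : ℕ) + 1 := rfl
      rw [hs, this, Nat.testBit_succ]
      have hdiv : ((c 0).toNat + 2 * ∑ i : Fin n, 2 ^ (i : ℕ) * (c i.succ).toNat) / 2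
          = ∑ i : Fin n, 2 ^ (i : ℕ) * (c i.succ).toNat := by
        rcases Bool.eq_false_or_eq_true (c 0) with h | h <;> simp [h] <;> omega
      rw [hdiv, ih]

/-- highest differing bit: if `u ≤ v` and bits differ somewhere with u-bit 1 & v-bit 0 at `i`,
then there is `i0 > i` with v-bit 1 and u-bit 0. -/
lemma high_bit {u v i : ℕ} (huv : u ≤ v) (hu : Nat.testBit u i = true)
    (hv : Nat.testBit v i = false) :
    ∃ i0, i < i0 ∧ Nat.testBit v i0 = true ∧ Nat.testBit u i0 = false := by
  have hne : u ^^^ v ≠ 0 := by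
    intro h
    have h2 : u = v := by
      have := congrArg (u ^^^ ·) h
      simpa [← Nat.xor_assoc] using this.symm
    rw [h2, hv] at hu
    simp at hu
  obtain ⟨i0, hbit, hmax⟩ := Nat.exists_most_significant_bit hne
  have hdiff : Nat.testBit u i0 ≠ Nat.testBit v i0 := by
    intro h
    rw [Nat.testBit_xor, h, Bool.xor_self] at hbit
    simp at hbit
  have heq : ∀ j, i0 < j → Nat.testBit u j = Nat.testBit v j := by
    intro j hj
    have h2 := hmax j hj
    rw [Nat.testBit_xor] at h2
    revert h2
    cases hju : Nat.testBit u j <;> cases hjv : Nat.testBit v j <;> simp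
  have hv0 : Nat.testBit v i0 = true := by
    cases hvv : Nat.testBit v i0
    · exfalso
      have hu0 : Nat.testBit u i0 = true := by
        cases huu : Nat.testBit u i0
        · exact absurd (huu.trans hvv.symm) hdiff
        · rfl
      have : v < u := Nat.lt_of_testBit i0 hvv hu0 fun j hj => (heq j hj).symm
      omega
    · rfl
  have hu0 : Nat.testBit u i0 = false := by
    cases huu : Nat.testBit u i0
    · rfl
    · exact absurd (huu.trans hv0.symm) hdiff
  refine ⟨i0, ?_, hv0, hu0⟩
  rcases Nat.lt_trichotomy i i0 with h | h | h
  · exact h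
  · exfalso; rw [h, hu0] at hu; simp at hu
  · exfalso
    have h2 := heq i h
    rw [hu, hv] at h2
    simp at h2

lemma Kset_subset_Pset (n a b : ℕ) (hb : b ≤ 2 ^ n - 1) :
    Kset n a b ⊆ Pset n a b := by
  rintro x ⟨h01, ha, hbx⟩
  set c : Fin n → Bool := fun i => decide (x i = 1) with hc
  have hxc : ∀ i, x i = ((c i).toNat : ℝ) := by
    intro i
    rcases h01 i with h | h <;> simp [hc, h]
  set k : ℕ := ∑ i : Fin n, 2 ^ (i : ℕ) * (c i).toNat with hk
  have hkr : (k : ℝ) = ∑ i : Fin n, 2 ^ (i : ℕ) * x i := by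
    rw [hk]
    push_cast
    exact Finset.sum_congr rfl fun i _ => by rw [hxc i]
  have hak : a ≤ k := by exact_mod_cast hkr ▸ ha
  have hkb : k ≤ b := by exact_mod_cast hkr ▸ hbx
  have hkn : k < 2 ^ n := by
    have := pow_pos (by norm_num : 0 < 2) n
    omega
  have htb : ∀ j : Fin n, Nat.testBit k (j : ℕ) = c j := fun j => testBit_sum n c j
  have hx1 : ∀ j : Fin n, Nat.testBit k (j : ℕ) = true → x j = 1 := by
    intro j h
    rw [htb j] at h
    exact of_decide_eq_true h
  have hx0 : ∀ j : Fin n, Nat.testBit k (j : ℕ) = false → x j = 0 := by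
    intro j h
    rw [htb j] at h
    rcases h01 j with h' | h'
    · exact h'
    · exfalso
      have := of_decide_eq_false h
      exact this h'
  refine ⟨fun i => by rcases h01 i with h | h <;> simp [h], ?_, ?_⟩
  · intro i hi
    rcases h01 i with hxi | hxi
    · -- x i = 0, so testBit k i = false ≠ testBit a i
      have hki : Nat.testBit k (i : ℕ) = false := by
        rw [htb i, hc]
        simp [hxi]
      obtain ⟨i0, hii0, hk0, ha0⟩ := high_bit hak hi hki
      have hi0n : i0 < n := by
        by_contra h
        push_neg at h
        have : Nat.testBit k i0 = false :=
          Nat.testBit_eq_false_of_lt (lt_of_lt_of_le hkn (Nat.pow_le_pow_right (by norm_num) h))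
        rw [this] at hk0; exact Bool.false_ne_true hk0
      set j0 : Fin n := ⟨i0, hi0n⟩
      have hj0mem : j0 ∈ Finset.univ.filter
          (fun j : Fin n => ¬ Nat.testBit a (j : ℕ) ∧ (i : ℕ) < (j : ℕ)) := by
        simp only [Finset.mem_filter, Finset.mem_univ, true_and]
        exact ⟨by simp [j0, ha0], hii0⟩
      have hxj0 : x j0 = 1 := hx1 j0 hk0
      have : (1 : ℝ) ≤ ∑ j ∈ Finset.univ.filter
          (fun j : Fin n => ¬ Nat.testBit a (j : ℕ) ∧ (i : ℕ) < (j : ℕ)), x j := by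
        calc (1:ℝ) = x j0 := hxj0.symm
        _ ≤ _ := Finset.single_le_sum (f := fun j : Fin n => x j)
            (fun j _ => by rcases h01 j with h|h <;> simp [h]) hj0mem
      rw [hxi]
      linarith
    · rw [hxi]
      simp only [sub_self]
      exact Finset.sum_nonneg fun j _ => by rcases h01 j with h|h <;> simp [h]
  · intro i hi
    rcases h01 i with hxi | hxi
    · rw [hxi]
      exact Finset.sum_nonneg fun j _ => by rcases h01 j with h|h <;> simp [h]
    · have hki : Nat.testBit k (i : ℕ) = true := by
        rw [htb i, hc]; simp [hxi]
      have hbi : Nat.testBit b (i : ℕ) = false := by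
        rwa [Bool.not_eq_true] at hi
      obtain ⟨i0, hii0, hb0, hk0⟩ := high_bit hkb hki hbi
      have hi0n : i0 < n := by
        by_contra h
        push_neg at h
        have hblt : b < 2 ^ n := by
          have := pow_pos (by norm_num : 0 < 2) n
          omega
        have : Nat.testBit b i0 = false :=
          Nat.testBit_eq_false_of_lt (lt_of_lt_of_le hblt (Nat.pow_le_pow_right (by norm_num) h))
        rw [this] at hb0; exact Bool.false_ne_true hb0
      set j0 : Fin n := ⟨i0, hi0n⟩
      have hj0mem : j0 ∈ Finset.univ.filter
          (fun j : Fin n => Nat.testBit b (j : ℕ) ∧ (i : ℕ) < (j : ℕ)) := by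
        simp only [Finset.mem_filter, Finset.mem_univ, true_and]
        exact ⟨by simp [j0, hb0], hii0⟩
      have hxj0 : x j0 = 0 := hx0 j0 hk0
      have : (1 : ℝ) ≤ ∑ j ∈ Finset.univ.filter
          (fun j : Fin n => Nat.testBit b (j : ℕ) ∧ (i : ℕ) < (j : ℕ)), (1 - x j) := by
        calc (1:ℝ) = 1 - x j0 := by rw [hxj0]; ring
        _ ≤ _ := Finset.single_le_sum (f := fun j : Fin n => 1 - x j)
            (fun j _ => by rcases h01 j with h|h <;> simp [h]) hj0mem
      rw [hxi]
      linarith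

lemma Pset_convex (n a b : ℕ) : Convex ℝ (Pset n a b) := by
  rintro x ⟨hx1, hx2, hx3⟩ y ⟨hy1, hy2, hy3⟩ u v hu hv huv
  have hptw : ∀ j : Fin n, (u • x + v • y) j = u * x j + v * y j := fun j => rfl
  refine ⟨fun i => ?_, fun i hi => ?_, fun i hi => ?_⟩
  · rw [hptw]
    obtain ⟨h1, h2⟩ := hx1 i
    obtain ⟨h3, h4⟩ := hy1 i
    constructor
    · positivity
    · nlinarith
  · have hsum : ∑ j ∈ Finset.univ.filter
        (fun j : Fin n => ¬ Nat.testBit a j ∧ (i : ℕ) < (j : ℕ)), (u • x + v • y) j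
        = u * ∑ j ∈ Finset.univ.filter
          (fun j : Fin n => ¬ Nat.testBit a j ∧ (i : ℕ) < (j : ℕ)), x j
        + v * ∑ j ∈ Finset.univ.filter
          (fun j : Fin n => ¬ Nat.testBit a j ∧ (i : ℕ) < (j : ℕ)), y j := by
      rw [Finset.mul_sum, Finset.mul_sum, ← Finset.sum_add_distrib]
      exact Finset.sum_congr rfl fun j _ => hptw j
    rw [hptw, hsum]
    have h2 := hx2 i hi
    have h3 := hy2 i hi
    nlinarith
  · have hsum : ∑ j ∈ Finset.univ.filter
        (fun j : Fin n => Nat.testBit b j ∧ (i : ℕ) < (j : ℕ)), (1 - (u • x + v • y) j)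
        = u * ∑ j ∈ Finset.univ.filter
          (fun j : Fin n => Nat.testBit b j ∧ (i : ℕ) < (j : ℕ)), (1 - x j)
        + v * ∑ j ∈ Finset.univ.filter
          (fun j : Fin n => Nat.testBit b j ∧ (i : ℕ) < (j : ℕ)), (1 - y j) := by
      rw [Finset.mul_sum, Finset.mul_sum, ← Finset.sum_add_distrib]
      refine Finset.sum_congr rfl fun j _ => ?_
      rw [hptw]
      nlinarith [hx1 j, hy1 j]
    rw [hptw, hsum]
    have h2 := hx3 i hi
    have h3 := hy3 i hi
    nlinarith

noncomputable def snocMap (n : ℕ) (c : ℝ) : (Fin n → ℝ) →ᵃ[ℝ] (Fin (n+1) → ℝ) where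
  toFun := fun x => Fin.snoc x c
  linear :=
    { toFun := fun x => Fin.snoc x 0
      map_add' := by
        intro x y; funext i
        induction i using Fin.lastCases with
        | last => simp
        | cast i => simp
      map_smul' := by
        intro r x; funext i
        induction i using Fin.lastCases with
        | last => simp
        | cast i => simp }
  map_vadd' := by
    intro p v; funext i
    induction i using Fin.lastCases with
    | last => simp
    | cast i => simp

lemma bit_lt {k m : ℕ} (hk : k < 2 ^ (m + 1)) (h : Nat.testBit k m = false) : k < 2 ^ m := by
  by_contra hc
  push_neg at hc
  have hdiv : k / 2 ^ m = 1 := by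
    apply Nat.div_eq_of_lt_le (by simpa using hc)
    rw [pow_succ] at hk
    omega
  rw [Nat.testBit_eq_decide_div_mod_eq, hdiv] at h
  simp at h

lemma bit_ge {k m : ℕ} (h : Nat.testBit k m = true) : 2 ^ m ≤ k := by
  by_contra hc
  push_neg at hc
  rw [Nat.testBit_eq_false_of_lt hc] at h
  simp at h

lemma sub_bits {k m j : ℕ} (h1 : 2 ^ m ≤ k) (h2 : k < 2 ^ (m + 1)) (hj : j < m) :
    Nat.testBit (k - 2 ^ m) j = Nat.testBit k j := by
  have hmod : k % 2 ^ m = k - 2 ^ m := by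
    rw [Nat.mod_eq_sub_mod h1]
    apply Nat.mod_eq_of_lt
    rw [pow_succ] at h2
    omega
  rw [← hmod, Nat.testBit_mod_two_pow]
  simp [hj]

lemma filter_sum_split (n : ℕ) (p : Fin (n + 1) → Prop) [DecidablePred p] (g : Fin (n + 1) → ℝ) :
    ∑ j ∈ Finset.univ.filter p, g j
      = (∑ j ∈ Finset.univ.filter (fun j : Fin n => p j.castSucc), g j.castSucc)
        + (if p (Fin.last n) then g (Fin.last n) else 0) := by
  rw [Finset.sum_filter, Finset.sum_filter, Fin.sum_univ_castSucc]

lemma val_snoc (n : ℕ) (x : Fin n → ℝ) (c : ℝ) :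
    ∑ i : Fin (n + 1), 2 ^ (i : ℕ) * (Fin.snoc x c : Fin (n + 1) → ℝ) i
      = (∑ i : Fin n, 2 ^ (i : ℕ) * x i) + 2 ^ n * c := by
  rw [Fin.sum_univ_castSucc]
  simp

lemma snoc0_mem_Kset {n a b a' b' : ℕ} (ha : a ≤ a') (hbb : b' ≤ b) {x : Fin n → ℝ}
    (hx : x ∈ Kset n a' b') : (Fin.snoc x 0 : Fin (n + 1) → ℝ) ∈ Kset (n + 1) a b := by
  obtain ⟨h01, h1, h2⟩ := hx
  refine ⟨fun i => ?_, ?_, ?_⟩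
  · induction i using Fin.lastCases with
    | last => left; simp
    | cast i => simpa using h01 i
  · rw [val_snoc]
    have : (a : ℝ) ≤ (a' : ℝ) := Nat.cast_le.mpr ha
    linarith
  · rw [val_snoc]
    have : (b' : ℝ) ≤ (b : ℝ) := Nat.cast_le.mpr hbb
    linarith

lemma snoc1_mem_Kset {n a b a' b' : ℕ} (ha : a ≤ a' + 2 ^ n) (hbb : b' + 2 ^ n ≤ b)
    {x : Fin n → ℝ} (hx : x ∈ Kset n a' b') :
    (Fin.snoc x 1 : Fin (n + 1) → ℝ) ∈ Kset (n + 1) a b := by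
  obtain ⟨h01, h1, h2⟩ := hx
  refine ⟨fun i => ?_, ?_, ?_⟩
  · induction i using Fin.lastCases with
    | last => right; simp
    | cast i => simpa using h01 i
  · rw [val_snoc]
    have h3 : (a : ℝ) ≤ (a' : ℝ) + 2 ^ n := by exact_mod_cast Nat.cast_le.mpr ha
    linarith
  · rw [val_snoc]
    have h3 : (b' : ℝ) + 2 ^ n ≤ (b : ℝ) := by exact_mod_cast Nat.cast_le.mpr hbb
    linarith

lemma convexHull_snoc {n : ℕ} (c : ℝ) {s : Set (Fin n → ℝ)} {K : Set (Fin (n + 1) → ℝ)}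
    (h : ∀ w ∈ s, (Fin.snoc w c : Fin (n + 1) → ℝ) ∈ K) {x : Fin n → ℝ}
    (hx : x ∈ convexHull ℝ s) : (Fin.snoc x c : Fin (n + 1) → ℝ) ∈ convexHull ℝ K := by
  have himg := AffineMap.image_convexHull (𝕜 := ℝ) (snocMap n c) s
  have hmem : (Fin.snoc x c : Fin (n + 1) → ℝ) ∈ (snocMap n c) '' (convexHull ℝ s) :=
    ⟨x, hx, rfl⟩
  rw [himg] at hmem
  refine convexHull_mono ?_ hmem
  rintro _ ⟨w, hw, rfl⟩
  exact h w hw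

set_option maxHeartbeats 1000000 in
lemma Pset_subset_convexHull :
    ∀ n a b : ℕ, a ≤ b → b ≤ 2 ^ n - 1 → Pset n a b ⊆ convexHull ℝ (Kset n a b) := by
  intro n
  induction n with
  | zero =>
    intro a b hab hb x _
    have hb0 : b = 0 := by simpa using hb
    apply subset_convexHull
    refine ⟨fun i => i.elim0, ?_, ?_⟩
    · have ha0 : a = 0 := by omega
      simp [ha0]
    · simp [hb0]
  | succ n ih =>
    intro a b hab hb x hx
    obtain ⟨hbox, hA, hB⟩ := hx
    have h2n : (0:ℕ) < 2 ^ n := pow_pos (by norm_num) n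
    have hpow : (2:ℕ) ^ (n + 1) = 2 ^ n * 2 := pow_succ 2 n
    have hb2 : b < 2 ^ (n + 1) := by omega
    have ha2 : a < 2 ^ (n + 1) := lt_of_le_of_lt hab hb2
    by_cases hβ : Nat.testBit b n
    · by_cases hα : Nat.testBit a n
      · -- top bit of a and b both 1 : x_n = 1 forced
        have h2a : 2 ^ n ≤ a := bit_ge hα
        have h2b : 2 ^ n ≤ b := bit_ge hβ
        have hxl : x (Fin.last n) = 1 := by
          have h := hA (Fin.last n) (by rw [Fin.val_last]; exact hα)
          have hempty : (Finset.univ.filter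
              (fun j : Fin (n+1) => ¬ Nat.testBit a (j:ℕ) ∧ ((Fin.last n : Fin (n+1)):ℕ) < (j:ℕ))) = ∅ := by
            apply Finset.filter_false_of_mem
            intro j _ hj
            have h2 := hj.2
            rw [Fin.val_last] at h2
            have := j.isLt
            omega
          rw [hempty, Finset.sum_empty] at h
          have := (hbox (Fin.last n)).2
          linarith
        have hx'P : (fun j : Fin n => x j.castSucc) ∈ Pset n (a - 2 ^ n) (b - 2 ^ n) := by
          refine ⟨fun i => hbox i.castSucc, fun i hi => ?_, fun i hi => ?_⟩
          · have hi' : Nat.testBit a (i : ℕ) = true := by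
              rw [← sub_bits h2a ha2 i.isLt]; exact hi
            have h := hA i.castSucc (by rw [Fin.coe_castSucc]; exact hi')
            rw [filter_sum_split] at h
            rw [if_neg (fun hp => by rw [Fin.val_last] at hp; exact hp.1 hα), add_zero] at h
            simp only [Fin.coe_castSucc] at h
            refine le_trans h (le_of_eq ?_)
            refine Finset.sum_congr (Finset.filter_congr fun j _ => ?_) (fun _ _ => rfl)
            rw [sub_bits h2a ha2 j.isLt]
          · have hi' : ¬ (Nat.testBit b (i : ℕ) = true) := by
              rw [← sub_bits h2b hb2 i.isLt]; exact hi
            have h := hB i.castSucc (by rw [Fin.coe_castSucc]; exact hi')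
            rw [filter_sum_split] at h
            rw [if_pos ⟨by rw [Fin.val_last]; exact hβ,
              by rw [Fin.coe_castSucc, Fin.val_last]; exact i.isLt⟩, hxl] at h
            rw [sub_self, add_zero] at h
            simp only [Fin.coe_castSucc] at h
            refine le_trans h (le_of_eq ?_)
            refine Finset.sum_congr (Finset.filter_congr fun j _ => ?_) (fun _ _ => rfl)
            rw [sub_bits h2b hb2 j.isLt]
        have hxeq : x = (Fin.snoc (fun j : Fin n => x j.castSucc) 1 : Fin (n+1) → ℝ) := by
          funext i
          induction i using Fin.lastCases with
          | last => rw [Fin.snoc_last]; exact hxl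
          | cast i => rw [Fin.snoc_castSucc]
        rw [hxeq]
        exact convexHull_snoc 1 (fun w hw => snoc1_mem_Kset (by omega) (by omega) hw)
          (ih (a - 2 ^ n) (b - 2 ^ n) (by omega) (by omega) hx'P)
      · -- top bit of a is 0, top bit of b is 1 : the splitting case
        have hα' : Nat.testBit a n = false := by rwa [Bool.not_eq_true] at hα
        have halt : a < 2 ^ n := bit_lt ha2 hα'
        have h2b : 2 ^ n ≤ b := bit_ge hβ
        have ht0 : 0 ≤ x (Fin.last n) := (hbox (Fin.last n)).1
        have ht1' : x (Fin.last n) ≤ 1 := (hbox (Fin.last n)).2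
        -- membership of the y-part (top coordinate 1); needs only the B constraints
        have hyP : ∀ y' : Fin n → ℝ, (∀ j, 0 ≤ y' j ∧ y' j ≤ 1) →
            (∀ i : Fin n, ¬ Nat.testBit b (i:ℕ) →
              y' i ≤ ∑ j ∈ Finset.univ.filter
                (fun j : Fin n => Nat.testBit b (j:ℕ) ∧ (i : ℕ) < (j : ℕ)), (1 - y' j)) →
            y' ∈ Pset n 0 (b - 2 ^ n) := by
          intro y' hybox hyB
          refine ⟨hybox, fun i hi => ?_, fun i hi => ?_⟩
          · rw [Nat.zero_testBit] at hi
            exact absurd hi (by simp)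
          · have hi' : ¬ (Nat.testBit b (i : ℕ) = true) := by
              rw [← sub_bits h2b hb2 i.isLt]; exact hi
            refine le_trans (hyB i hi') (le_of_eq ?_)
            refine Finset.sum_congr (Finset.filter_congr fun j _ => ?_) (fun _ _ => rfl)
            rw [sub_bits h2b hb2 j.isLt]
        -- membership of the z-part (top coordinate 0); needs only the A constraints
        have hzP : ∀ z' : Fin n → ℝ, (∀ j, 0 ≤ z' j ∧ z' j ≤ 1) →
            (∀ i : Fin n, Nat.testBit a (i:ℕ) →
              1 - z' i ≤ ∑ j ∈ Finset.univ.filter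
                (fun j : Fin n => ¬ Nat.testBit a (j:ℕ) ∧ (i : ℕ) < (j : ℕ)), z' j) →
            z' ∈ Pset n a (2 ^ n - 1) := by
          intro z' hzbox hzA
          refine ⟨hzbox, hzA, fun i hi => ?_⟩
          exact absurd (by rw [Nat.testBit_two_pow_sub_one]; exact decide_eq_true i.isLt) hi
        have hyK : ∀ y' : Fin n → ℝ, y' ∈ Pset n 0 (b - 2 ^ n) →
            (Fin.snoc y' 1 : Fin (n+1) → ℝ) ∈ convexHull ℝ (Kset (n+1) a b) := by
          intro y' hy'
          exact convexHull_snoc 1 (fun w hw => snoc1_mem_Kset (by omega) (by omega) hw)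
            (ih 0 (b - 2 ^ n) (by omega) (by omega) hy')
        have hzK : ∀ z' : Fin n → ℝ, z' ∈ Pset n a (2 ^ n - 1) →
            (Fin.snoc z' 0 : Fin (n+1) → ℝ) ∈ convexHull ℝ (Kset (n+1) a b) := by
          intro z' hz'
          exact convexHull_snoc 0 (fun w hw => snoc0_mem_Kset le_rfl (by omega) hw)
            (ih a (2 ^ n - 1) (by omega) le_rfl hz')
        by_cases hteq : x (Fin.last n) = 1
        · -- top coordinate is exactly 1
          have hx'B : ∀ i : Fin n, ¬ Nat.testBit b (i:ℕ) →
              x i.castSucc ≤ ∑ j ∈ Finset.univ.filter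
                (fun j : Fin n => Nat.testBit b (j:ℕ) ∧ (i : ℕ) < (j : ℕ)), (1 - x j.castSucc) := by
            intro i hi
            have h := hB i.castSucc (by rw [Fin.coe_castSucc]; exact hi)
            rw [filter_sum_split] at h
            rw [if_pos ⟨by rw [Fin.val_last]; exact hβ,
              by rw [Fin.coe_castSucc, Fin.val_last]; exact i.isLt⟩, hteq] at h
            rw [sub_self, add_zero] at h
            simp only [Fin.coe_castSucc] at h
            exact h
          have hxeq : x = (Fin.snoc (fun j : Fin n => x j.castSucc) 1 : Fin (n+1) → ℝ) := by
            funext i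
            induction i using Fin.lastCases with
            | last => rw [Fin.snoc_last]; exact hteq
            | cast i => rw [Fin.snoc_castSucc]
          rw [hxeq]
          exact hyK _ (hyP _ (fun j => hbox j.castSucc) hx'B)
        · -- top coordinate t < 1 : split x into a convex combination
          have ht1 : x (Fin.last n) < 1 := lt_of_le_of_ne ht1' hteq
          have h1t : (0:ℝ) < 1 - x (Fin.last n) := by linarith
          set t := x (Fin.last n) with htdef
          set z' : Fin n → ℝ := fun j => min 1 (x j.castSucc / (1 - t)) with hz'def
          set y' : Fin n → ℝ := fun j => max 0 ((x j.castSucc - (1 - t)) / t) with hy'def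
          have hzbox : ∀ j, 0 ≤ z' j ∧ z' j ≤ 1 := by
            intro j
            exact ⟨le_min (by norm_num) (div_nonneg (hbox j.castSucc).1 h1t.le),
              min_le_left _ _⟩
          have hybox : ∀ j, 0 ≤ y' j ∧ y' j ≤ 1 := by
            intro j
            refine ⟨le_max_left _ _, max_le (by norm_num) ?_⟩
            rcases ht0.eq_or_lt with h | h
            · rw [← h]; simp
            · rw [div_le_one h]
              have := (hbox j.castSucc).2
              linarith
          have hy0 : ∀ j : Fin n, x j.castSucc ≤ 1 - t → y' j = 0 := by
            intro j hj
            apply max_eq_left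
            rcases ht0.eq_or_lt with h | h
            · rw [← h]; simp
            · exact div_nonpos_of_nonpos_of_nonneg (by linarith) h.le
          -- A constraints for z'
          have hzA : ∀ i : Fin n, Nat.testBit a (i:ℕ) →
              1 - z' i ≤ ∑ j ∈ Finset.univ.filter
                (fun j : Fin n => ¬ Nat.testBit a (j:ℕ) ∧ (i : ℕ) < (j : ℕ)), z' j := by
            intro i hi
            have h := hA i.castSucc (by rw [Fin.coe_castSucc]; exact hi)
            rw [filter_sum_split] at h
            rw [if_pos ⟨by rw [Fin.val_last]; simp [hα'],
              by rw [Fin.coe_castSucc, Fin.val_last]; exact i.isLt⟩] at h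
            simp only [Fin.coe_castSucc] at h
            rw [← htdef] at h
            by_cases hex : ∃ j0 ∈ Finset.univ.filter
                (fun j : Fin n => ¬ Nat.testBit a (j:ℕ) ∧ (i : ℕ) < (j : ℕ)), 1 - t ≤ x j0.castSucc
            · obtain ⟨j0, hj0, hj0le⟩ := hex
              have hz1 : z' j0 = 1 := min_eq_left (by rw [le_div_iff₀ h1t]; linarith)
              have hge : (1:ℝ) ≤ ∑ j ∈ Finset.univ.filter
                  (fun j : Fin n => ¬ Nat.testBit a (j:ℕ) ∧ (i : ℕ) < (j : ℕ)), z' j := by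
                calc (1:ℝ) = z' j0 := hz1.symm
                _ ≤ _ := Finset.single_le_sum (f := fun j => z' j)
                    (fun j _ => (hzbox j).1) hj0
              have := (hzbox i).1
              linarith
            · push_neg at hex
              by_cases hzi : 1 ≤ x i.castSucc / (1 - t)
              · have hz1 : z' i = 1 := min_eq_left hzi
                rw [hz1]
                simp only [sub_self]
                exact Finset.sum_nonneg fun j _ => (hzbox j).1
              · push_neg at hzi
                have hzieq : z' i = x i.castSucc / (1 - t) := min_eq_right hzi.le
                have hsum : ∑ j ∈ Finset.univ.filter
                    (fun j : Fin n => ¬ Nat.testBit a (j:ℕ) ∧ (i : ℕ) < (j : ℕ)), z' j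
                    = (∑ j ∈ Finset.univ.filter
                      (fun j : Fin n => ¬ Nat.testBit a (j:ℕ) ∧ (i : ℕ) < (j : ℕ)),
                        x j.castSucc) / (1 - t) := by
                  rw [Finset.sum_div]
                  refine Finset.sum_congr rfl fun j hj => ?_
                  exact min_eq_right (by rw [div_le_one h1t]; linarith [hex j hj])
                rw [hzieq, hsum]
                rw [show (1:ℝ) - x i.castSucc / (1 - t) = ((1 - t) - x i.castSucc) / (1 - t) by
                  field_simp]
                gcongr
                linarith
          -- B constraints for y'
          have hyB : ∀ i : Fin n, ¬ Nat.testBit b (i:ℕ) →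
              y' i ≤ ∑ j ∈ Finset.univ.filter
                (fun j : Fin n => Nat.testBit b (j:ℕ) ∧ (i : ℕ) < (j : ℕ)), (1 - y' j) := by
            intro i hi
            have h := hB i.castSucc (by rw [Fin.coe_castSucc]; exact hi)
            rw [filter_sum_split] at h
            rw [if_pos ⟨by rw [Fin.val_last]; exact hβ,
              by rw [Fin.coe_castSucc, Fin.val_last]; exact i.isLt⟩] at h
            simp only [Fin.coe_castSucc] at h
            rw [← htdef] at h
            by_cases hyi0 : x i.castSucc ≤ 1 - t
            · have hyi : y' i = 0 := hy0 i hyi0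
              rw [hyi]
              exact Finset.sum_nonneg fun j _ => by
                show (0:ℝ) ≤ 1 - y' j
                linarith [(hybox j).2]
            · push_neg at hyi0
              have htpos : 0 < t := by linarith [(hbox i.castSucc).2]
              have hyieq : y' i = (x i.castSucc - (1 - t)) / t :=
                max_eq_right (div_nonneg (by linarith) htpos.le)
              by_cases hex : ∃ j0 ∈ Finset.univ.filter
                  (fun j : Fin n => Nat.testBit b (j:ℕ) ∧ (i : ℕ) < (j : ℕ)),
                    x j0.castSucc ≤ 1 - t
              · obtain ⟨j0, hj0, hle⟩ := hex
                have hyj0 : y' j0 = 0 := hy0 j0 hle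
                have hge : (1:ℝ) ≤ ∑ j ∈ Finset.univ.filter
                    (fun j : Fin n => Nat.testBit b (j:ℕ) ∧ (i : ℕ) < (j : ℕ)), (1 - y' j) := by
                  calc (1:ℝ) = 1 - y' j0 := by rw [hyj0]; ring
                  _ ≤ _ := Finset.single_le_sum (f := fun j => 1 - y' j)
                      (fun j _ => by show (0:ℝ) ≤ 1 - y' j; linarith [(hybox j).2]) hj0
                linarith [(hybox i).2]
              · push_neg at hex
                have hsum : ∑ j ∈ Finset.univ.filter
                    (fun j : Fin n => Nat.testBit b (j:ℕ) ∧ (i : ℕ) < (j : ℕ)), (1 - y' j)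
                    = (∑ j ∈ Finset.univ.filter
                      (fun j : Fin n => Nat.testBit b (j:ℕ) ∧ (i : ℕ) < (j : ℕ)),
                        (1 - x j.castSucc)) / t := by
                  rw [Finset.sum_div]
                  refine Finset.sum_congr rfl fun j hj => ?_
                  have hyj : y' j = (x j.castSucc - (1 - t)) / t :=
                    max_eq_right (div_nonneg (by linarith [hex j hj]) htpos.le)
                  rw [hyj]
                  field_simp
                  ring
                rw [hyieq, hsum]
                gcongr
                linarith
          -- the convex combination
          have hcomb : x = (1 - t) • (Fin.snoc z' 0 : Fin (n+1) → ℝ)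
              + t • (Fin.snoc y' 1 : Fin (n+1) → ℝ) := by
            funext i
            induction i using Fin.lastCases with
            | last =>
              show x (Fin.last n) = (1 - t) * (Fin.snoc z' 0 : Fin (n+1) → ℝ) (Fin.last n)
                + t * (Fin.snoc y' 1 : Fin (n+1) → ℝ) (Fin.last n)
              rw [Fin.snoc_last, Fin.snoc_last, ← htdef]
              ring
            | cast i =>
              show x i.castSucc = (1 - t) * (Fin.snoc z' 0 : Fin (n+1) → ℝ) i.castSucc
                + t * (Fin.snoc y' 1 : Fin (n+1) → ℝ) i.castSucc
              rw [Fin.snoc_castSucc, Fin.snoc_castSucc, hz'def, hy'def]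
              simp only
              rcases le_or_gt (x i.castSucc) (1 - t) with h | h
              · rw [min_eq_right (by rw [div_le_one h1t]; linarith),
                  max_eq_left ?_]
                · field_simp; ring
                · rcases ht0.eq_or_lt with h' | h'
                  · rw [← h']; simp
                  · exact div_nonpos_of_nonpos_of_nonneg (by linarith) h'.le
              · have htpos : 0 < t := by linarith [(hbox i.castSucc).2]
                rw [min_eq_left (by rw [le_div_iff₀ h1t]; linarith),
                  max_eq_right (div_nonneg (by linarith) htpos.le)]
                field_simp; ring
          rw [hcomb]
          exact (convex_convexHull ℝ (Kset (n+1) a b))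
            (hzK _ (hzP _ hzbox hzA)) (hyK _ (hyP _ hybox hyB))
            (by linarith) ht0 (by ring)
    · -- top bit of b is 0 : x_n = 0 forced
      have hβ' : Nat.testBit b n = false := by rwa [Bool.not_eq_true] at hβ
      have hblt : b < 2 ^ n := bit_lt hb2 hβ'
      have halt : a < 2 ^ n := lt_of_le_of_lt hab hblt
      have hta : Nat.testBit a n = false := Nat.testBit_eq_false_of_lt halt
      have hxl : x (Fin.last n) = 0 := by
        have h := hB (Fin.last n) (by rw [Fin.val_last]; simp [hβ'])
        have hempty : (Finset.univ.filter
            (fun j : Fin (n+1) => Nat.testBit b (j:ℕ) ∧ ((Fin.last n : Fin (n+1)):ℕ) < (j:ℕ))) = ∅ := by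
          apply Finset.filter_false_of_mem
          intro j _ hj
          have h2 := hj.2
          rw [Fin.val_last] at h2
          have := j.isLt
          omega
        rw [hempty, Finset.sum_empty] at h
        have := (hbox (Fin.last n)).1
        linarith
      have hx'P : (fun j : Fin n => x j.castSucc) ∈ Pset n a b := by
        refine ⟨fun i => hbox i.castSucc, fun i hi => ?_, fun i hi => ?_⟩
        · have h := hA i.castSucc (by rw [Fin.coe_castSucc]; exact hi)
          rw [filter_sum_split] at h
          rw [if_pos ⟨by rw [Fin.val_last]; simp [hta],
            by rw [Fin.coe_castSucc, Fin.val_last]; exact i.isLt⟩, hxl, add_zero] at h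
          simp only [Fin.coe_castSucc] at h
          exact h
        · have h := hB i.castSucc (by rw [Fin.coe_castSucc]; exact hi)
          rw [filter_sum_split] at h
          rw [if_neg (fun hp => by rw [Fin.val_last] at hp; exact hβ hp.1), add_zero] at h
          simp only [Fin.coe_castSucc] at h
          exact h
      have hxeq : x = (Fin.snoc (fun j : Fin n => x j.castSucc) 0 : Fin (n+1) → ℝ) := by
        funext i
        induction i using Fin.lastCases with
        | last => rw [Fin.snoc_last]; exact hxl
        | cast i => rw [Fin.snoc_castSucc]
      rw [hxeq]
      exact convexHull_snoc 0 (fun w hw => snoc0_mem_Kset le_rfl le_rfl hw)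
        (ih a b hab (Nat.le_sub_one_of_lt hblt) hx'P)

/-- Explicit facet description of conv(K(a,b)), where
K(a,b) = {x ∈ {0,1}ⁿ : a ≤ Σ_i 2^i x_i ≤ b} and N^k is the support of the binary
expansion of k (given by `Nat.testBit`). -/
theorem convexHull_K_interval (n a b : ℕ) (hab : a ≤ b) (hb : b ≤ 2 ^ n - 1) :
    convexHull ℝ {x : Fin n → ℝ | (∀ i, x i = 0 ∨ x i = 1) ∧
        (a : ℝ) ≤ ∑ i : Fin n, 2 ^ (i : ℕ) * x i ∧
        ∑ i : Fin n, 2 ^ (i : ℕ) * x i ≤ (b : ℝ)} =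
      {x : Fin n → ℝ | (∀ i, 0 ≤ x i ∧ x i ≤ 1) ∧
        (∀ i : Fin n, Nat.testBit a i →
          1 - x i ≤ ∑ j ∈ Finset.univ.filter
            (fun j : Fin n => ¬ Nat.testBit a j ∧ (i : ℕ) < (j : ℕ)), x j) ∧
        (∀ i : Fin n, ¬ Nat.testBit b i →
          x i ≤ ∑ j ∈ Finset.univ.filter
            (fun j : Fin n => Nat.testBit b j ∧ (i : ℕ) < (j : ℕ)), (1 - x j))} := by
  refine Set.Subset.antisymm ?_ ?_
  · exact convexHull_min (Kset_subset_Pset n a b hb) (Pset_convex n a b)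
  · exact Pset_subset_convexHull n a b hab hb
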